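/- Let M = [[a, b], [c, d]] be a real matrix with δ = det M = ±1, d ≠ 0, k > 0. The Möbius image under M of the cycle (k, 0, 1, 0) (the circle k(u²+v²) − 2v = 0 through the origin tangent to the real axis) is the horocycle (d²k, bdk, δ, b²k), which is tangent to the real line at the point b/d and has radius 1/(k·d²). -/

import Mathlib

/-- Let `M = [[a, b], [c, d]]` be real with `δ = det M = ±1`, `d ≠ 0`,
`k > 0`. The Möbius image under `M` of the cycle `(k, 0, 1, 0)` (the circle
`k(u²+v²) - 2v = 0` through the origin tangent to the real axis) is the horocycle
`(d²k, bdk, δ, b²k)`: every image point satisfies its equation, it touches the real line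
exactly at the point `b/d`, and it has radius `1/(k d²)`. -/
theorem mobius_image_of_tangent_circle_is_horocycle
    (a b c d k : ℝ) (δ : ℝ) (hδ : δ = a * d - b * c)
    (hδ1 : δ = 1 ∨ δ = -1) (hd : d ≠ 0) (hk : 0 < k) :
    (∀ z : ℂ, k * (z.re ^ 2 + z.im ^ 2) - 2 * z.im = 0 → (c : ℂ) * z + (d : ℂ) ≠ 0 →
      (d ^ 2 * k) * ((((a : ℂ) * z + b) / ((c : ℂ) * z + d)).re ^ 2 +
          (((a : ℂ) * z + b) / ((c : ℂ) * z + d)).im ^ 2)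
        - 2 * (b * d * k) * (((a : ℂ) * z + b) / ((c : ℂ) * z + d)).re
        - 2 * δ * (((a : ℂ) * z + b) / ((c : ℂ) * z + d)).im + b ^ 2 * k = 0) ∧
    (∀ u : ℝ, (d ^ 2 * k) * u ^ 2 - 2 * (b * d * k) * u + b ^ 2 * k = 0 ↔ u = b / d) ∧
    ((b * d * k) ^ 2 + δ ^ 2 - (b ^ 2 * k) * (d ^ 2 * k)) / (d ^ 2 * k) ^ 2 =
      (1 / (k * d ^ 2)) ^ 2 := by
  have hδ2 : δ ^ 2 = 1 := by rcases hδ1 with h | h <;> rw [h] <;> norm_num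
  refine ⟨?_, ?_, ?_⟩
  · intro z hz hden
    set x := z.re with hx
    set y := z.im with hy
    have hre0 : ((c : ℂ) * z + (d : ℂ)).re = c * x + d := by simp [hx]
    have him0 : ((c : ℂ) * z + (d : ℂ)).im = c * y := by simp [hy]
    have hD : (c * x + d) ^ 2 + (c * y) ^ 2 ≠ 0 := by
      intro h
      apply hden
      have h1 : c * x + d = 0 := by nlinarith [sq_nonneg (c*x+d), sq_nonneg (c*y)]
      have h2 : c * y = 0 := by nlinarith [sq_nonneg (c*x+d), sq_nonneg (c*y)]
      apply Complex.ext
      · rw [hre0, h1]; simp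
      · rw [him0, h2]; simp
    have hre : (((a : ℂ) * z + b) / ((c : ℂ) * z + d)).re =
        ((a*x+b)*(c*x+d) + (a*y)*(c*y)) / ((c*x+d)^2 + (c*y)^2) := by
      rw [Complex.div_re]; simp [Complex.normSq_apply, hx, hy]; ring
    have him : (((a : ℂ) * z + b) / ((c : ℂ) * z + d)).im =
        ((a*y)*(c*x+d) - (a*x+b)*(c*y)) / ((c*x+d)^2 + (c*y)^2) := by
      rw [Complex.div_im]; simp [Complex.normSq_apply, hx, hy]; ring
    rw [hre, him]
    have key : d^2*k*(((a*x+b)*(c*x+d)+a*y*(c*y))^2 + (a*y*(c*x+d)-(a*x+b)*(c*y))^2)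
        - 2*(b*d*k)*(((a*x+b)*(c*x+d)+a*y*(c*y))*((c*x+d)^2+(c*y)^2))
        - 2*δ*((a*y*(c*x+d)-(a*x+b)*(c*y))*((c*x+d)^2+(c*y)^2))
        + b^2*k*((c*x+d)^2+(c*y)^2)^2 = 0 := by
      subst hδ
      linear_combination ((c*x+d)^2 + (c*y)^2) * (a*d-b*c)^2 * hz
    set D := (c*x+d)^2 + (c*y)^2 with hDdef
    set P := (a*x+b)*(c*x+d) + a*y*(c*y) with hPdef
    set Q := a*y*(c*x+d) - (a*x+b)*(c*y) with hQdef
    clear_value D P Q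
    field_simp
    linear_combination key
  · intro u
    rw [eq_div_iff hd]
    constructor
    · intro h
      have h2 : k * (d * u - b) ^ 2 = 0 := by nlinarith
      have h3 : (d * u - b) ^ 2 = 0 := by
        rcases mul_eq_zero.mp h2 with h' | h'
        · exact absurd h' (ne_of_gt hk)
        · exact h'
      have h4 : d * u - b = 0 := by
        exact pow_eq_zero_iff two_ne_zero |>.mp h3
      linarith [h4]
    · intro h
      linear_combination k * (u * d - b) * h
  · rw [hδ2]
    have h1 : (b * d * k) ^ 2 + 1 - b ^ 2 * k * (d ^ 2 * k) = 1 := by ring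
    rw [h1, one_div, one_div, ← inv_pow]
    congr 1
    ring
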